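/- Fix n ∈ ℕ, n ≥ 1, and let D = [0,1]ⁿ. There exist constants k₁ > 0, k₂ > 0 and N₀ ∈ ℕ depending only on n such that for every δ ∈ (0,1) and every N ≥ N₀, if x₁,…,x_N are sampled i.i.d. from the uniform distribution on D, then with probability at least 1 − δ the covering radius satisfies h({x₁,…,x_N}, D) ≤ k₁·(log(k₂·N/δ)/N)^{1/n}. -/

import Mathlib

open MeasureTheory

private def cube (n m : ℕ) (c : Fin n → Fin m) : Set (EuclideanSpace ℝ (Fin n)) :=
  {x | ∀ i, x i ∈ Set.Icc ((c i : ℝ)/m) (((c i : ℝ)+1)/m)}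

private lemma cube_meas {n m : ℕ} (c : Fin n → Fin m) : MeasurableSet (cube n m c) := by
  have : cube n m c = ⋂ i, (fun x : EuclideanSpace ℝ (Fin n) => x i) ⁻¹' Set.Icc ((c i : ℝ)/m) (((c i : ℝ)+1)/m) := by
    ext x; simp [cube]
  rw [this]
  exact MeasurableSet.iInter fun i => ((measurable_pi_apply i).comp (MeasurableEquiv.toLp 2 (Fin n → ℝ)).symm.measurable) measurableSet_Icc

private lemma cube_vol {n m : ℕ} (c : Fin n → Fin m) :
    volume (cube n m c) = ENNReal.ofReal ((1/(m:ℝ))^n) := by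
  have h : cube n m c = (MeasurableEquiv.toLp 2 (Fin n → ℝ)).symm ⁻¹'
      (Set.univ.pi fun i => Set.Icc ((c i : ℝ)/m) (((c i : ℝ)+1)/m)) := by
    ext x; simp only [Set.mem_preimage, Set.mem_univ_pi]; rfl
  rw [h, (EuclideanSpace.volume_preserving_symm_measurableEquiv_toLp (Fin n)).measure_preimage
    (MeasurableSet.univ_pi fun i => measurableSet_Icc).nullMeasurableSet]
  rw [volume_pi_pi]
  have : ∀ i : Fin n, volume (Set.Icc ((c i : ℝ)/m) (((c i : ℝ)+1)/m)) = ENNReal.ofReal (1/(m:ℝ)) := by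
    intro i; rw [Real.volume_Icc]; ring_nf
  simp only [this, Finset.prod_const, Finset.card_univ, Fintype.card_fin]
  rw [← ENNReal.ofReal_pow (by positivity)]

private lemma cube_subset {n m : ℕ} (hm : 1 ≤ m) (c : Fin n → Fin m) :
    cube n m c ⊆ {x : EuclideanSpace ℝ (Fin n) | ∀ i, x i ∈ Set.Icc (0:ℝ) 1} := by
  intro x hx i
  have hm' : (0:ℝ) < m := by exact_mod_cast hm
  have h1 := (hx i).1; have h2 := (hx i).2
  have hci : ((c i : ℝ)+1) ≤ m := by exact_mod_cast (c i).2
  constructor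
  · have : (0:ℝ) ≤ (c i : ℝ)/m := by positivity
    linarith
  · have : ((c i : ℝ)+1)/m ≤ 1 := by rw [div_le_one hm']; exact hci
    linarith

private lemma cube_cover {n m : ℕ} (hm : 1 ≤ m) {x : EuclideanSpace ℝ (Fin n)}
    (hx : ∀ i, x i ∈ Set.Icc (0:ℝ) 1) : ∃ c : Fin n → Fin m, x ∈ cube n m c := by
  have hm' : (0:ℝ) < m := by exact_mod_cast hm
  refine ⟨fun i => ⟨min ⌊x i * m⌋₊ (m-1), ?_⟩, fun i => ?_⟩
  · exact lt_of_le_of_lt (min_le_right _ _) (Nat.sub_lt hm one_pos)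
  · have hx0 : 0 ≤ x i := (hx i).1
    have hx1 : x i ≤ 1 := (hx i).2
    have hxm : 0 ≤ x i * m := by positivity
    constructor
    · show (↑(min ⌊x i * m⌋₊ (m-1)) : ℝ)/m ≤ x i
      rw [div_le_iff₀ hm']
      calc (↑(min ⌊x i * m⌋₊ (m-1)) : ℝ) ≤ ⌊x i * m⌋₊ := by exact_mod_cast min_le_left _ _
        _ ≤ x i * m := Nat.floor_le hxm
    · show x i ≤ (↑(min ⌊x i * m⌋₊ (m-1)) + 1)/m
      rw [le_div_iff₀ hm']
      rcases le_or_gt ⌊x i * m⌋₊ (m-1) with h | h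
      · rw [min_eq_left h]
        exact le_of_lt (Nat.lt_floor_add_one _)
      · rw [min_eq_right (le_of_lt h)]
        have : ((m:ℝ)-1) + 1 = m := by ring
        have hc : (↑(m-1) : ℝ) = (m:ℝ) - 1 := by
          have : (1:ℕ) ≤ m := hm
          push_cast [Nat.cast_sub this]; ring
        rw [hc, this]
        nlinarith

private lemma cube_dist {n m : ℕ} (hm : 1 ≤ m) {c : Fin n → Fin m} {x y : EuclideanSpace ℝ (Fin n)}
    (hx : x ∈ cube n m c) (hy : y ∈ cube n m c) : dist x y ≤ Real.sqrt n / m := by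
  have hm' : (0:ℝ) < m := by exact_mod_cast hm
  rw [EuclideanSpace.dist_eq]
  simp only [Real.dist_eq]
  have h : ∀ i, |x i - y i|^2 ≤ (1/(m:ℝ))^2 := by
    intro i
    have h1 := (hx i).1; have h2 := (hx i).2
    have h3 := (hy i).1; have h4 := (hy i).2
    have hlen : ((c i : ℝ)+1)/m - (c i : ℝ)/m = 1/m := by field_simp; ring
    have habs : |x i - y i| ≤ 1/m := by
      rw [abs_sub_le_iff]; constructor <;> linarith [hlen]
    exact pow_le_pow_left₀ (abs_nonneg _) habs 2
  calc Real.sqrt (∑ i, |x i - y i|^2) ≤ Real.sqrt (∑ _i : Fin n, (1/(m:ℝ))^2) :=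
        Real.sqrt_le_sqrt (Finset.sum_le_sum fun i _ => h i)
    _ = Real.sqrt (n * (1/m)^2) := by rw [Finset.sum_const, Finset.card_univ, Fintype.card_fin, nsmul_eq_mul]
    _ = Real.sqrt n * (1/m) := by
        rw [Real.sqrt_mul (Nat.cast_nonneg n), Real.sqrt_sq (by positivity)]
    _ = Real.sqrt n / m := by ring

private lemma key13 (n N : ℕ) (hn : 1 ≤ n) (hN : 1 ≤ N) (δ : ℝ) (hδ : 0 < δ) (hδ1 : δ < 1) :
    ∃ m : ℕ, 1 ≤ m ∧
      Real.sqrt n / m ≤ 2 * Real.sqrt n * (Real.log (2*N/δ) / N) ^ ((1:ℝ)/n) ∧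
      (m:ℝ)^n * (1 - (1/(m:ℝ))^n)^N ≤ δ := by
  have hN' : (1:ℝ) ≤ N := by exact_mod_cast hN
  have hNpos : (0:ℝ) < N := by linarith
  have hratio : (2:ℝ) ≤ 2*N/δ := by
    rw [le_div_iff₀ hδ]
    nlinarith
  set t := Real.log (2*N/δ) with ht_def
  have ht : Real.log 2 ≤ t := Real.log_le_log (by norm_num) hratio
  have ht2 : (1/2:ℝ) < t := lt_of_lt_of_le (by
    have := Real.log_two_gt_d9; linarith) ht
  have htpos : 0 < t := by linarith
  have hsqrt : (0:ℝ) < Real.sqrt n := Real.sqrt_pos.2 (by exact_mod_cast hn)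
  rcases le_or_gt (N:ℝ) t with hc | hc
  · refine ⟨1, le_refl 1, ?_, ?_⟩
    · have h1 : (1:ℝ) ≤ t/N := (one_le_div hNpos).2 hc
      have h2 : (1:ℝ) ≤ (t/N) ^ ((1:ℝ)/n) :=
        Real.one_le_rpow h1 (by positivity)
      push_cast
      calc Real.sqrt n / 1 = Real.sqrt n := by ring
        _ ≤ 2 * Real.sqrt n * 1 := by linarith
        _ ≤ 2 * Real.sqrt n * (t/N) ^ ((1:ℝ)/n) := by nlinarith
    · have hz : ((1:ℕ):ℝ)^n * (1 - (1/((1:ℕ):ℝ))^n)^N = 0 := by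
        norm_num [zero_pow (show N ≠ 0 by omega)]
      rw [hz]; linarith
  · have hNt : (1:ℝ) < N/t := (one_lt_div htpos).2 hc
    set x := ((N:ℝ)/t) ^ ((1:ℝ)/n) with hx_def
    have hx1 : (1:ℝ) ≤ x := Real.one_le_rpow (le_of_lt hNt) (by positivity)
    have hxpos : (0:ℝ) < x := by linarith
    set m := ⌊x⌋₊ with hm_def
    have hm1 : 1 ≤ m := Nat.le_floor (by exact_mod_cast hx1)
    have hmR : (1:ℝ) ≤ m := by exact_mod_cast hm1
    have hmpos : (0:ℝ) < m := by linarith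
    have hmx : (m:ℝ) ≤ x := Nat.floor_le (by positivity)
    have hx2m : x ≤ 2*m := by
      have := Nat.lt_floor_add_one x
      linarith
    have hxn : x ^ n = (N:ℝ)/t := by
      rw [hx_def, ← Real.rpow_natCast (((N:ℝ)/t) ^ ((1:ℝ)/n)) n, ← Real.rpow_mul (by positivity)]
      rw [one_div, inv_mul_cancel₀ (Nat.cast_ne_zero.mpr (by omega))]
      exact Real.rpow_one _
    have hmn : (m:ℝ)^n ≤ (N:ℝ)/t := by
      rw [← hxn]; exact pow_le_pow_left₀ (by positivity) hmx n
    have hinv : t/(N:ℝ) ≤ (1/(m:ℝ))^n := by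
      rw [div_pow, one_pow]
      rw [div_le_div_iff₀ hNpos (by positivity)]
      calc t * (m:ℝ)^n ≤ t * ((N:ℝ)/t) := by nlinarith
        _ = N := by field_simp
        _ = 1 * N := by ring
    have hp1 : (1/(m:ℝ))^n ≤ 1 := by
      apply pow_le_one₀ (by positivity)
      rw [div_le_one hmpos]; exact hmR
    refine ⟨m, hm1, ?_, ?_⟩
    · have hrw : (t/(N:ℝ)) ^ ((1:ℝ)/n) = x⁻¹ := by
        rw [hx_def, ← Real.inv_rpow (by positivity), inv_div]
      rw [hrw]
      rw [div_le_iff₀ hmpos]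
      have : Real.sqrt n * x ≤ 2 * Real.sqrt n * m := by nlinarith
      calc Real.sqrt n = Real.sqrt n * x * x⁻¹ := by field_simp
        _ ≤ 2 * Real.sqrt n * m * x⁻¹ := by
            apply mul_le_mul_of_nonneg_right this (by positivity)
        _ = 2 * Real.sqrt n * x⁻¹ * m := by ring
    · set p := (1/(m:ℝ))^n with hp_def
      have hp0 : 0 ≤ p := by positivity
      have h1p : (1:ℝ) - p ≤ Real.exp (-p) := by
        have := Real.add_one_le_exp (-p); linarith
      have hpow : ((1:ℝ) - p)^N ≤ Real.exp (-p)^N :=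
        pow_le_pow_left₀ (by linarith) h1p N
      have hexp : Real.exp (-p)^N = Real.exp (-(N*p)) := by
        rw [← Real.exp_nat_mul]; ring_nf
      have hNp : t ≤ N * p := by
        calc t = N * (t/N) := by field_simp
          _ ≤ N * p := by nlinarith [hinv]
      have hexp2 : Real.exp (-(N*p)) ≤ Real.exp (-t) := Real.exp_le_exp.2 (by linarith)
      have hexpt : Real.exp (-t) = δ/(2*N) := by
        rw [ht_def, Real.exp_neg, Real.exp_log (by positivity)]
        rw [inv_div]
      calc (m:ℝ)^n * (1-p)^N ≤ ((N:ℝ)/t) * (δ/(2*N)) := by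
            apply mul_le_mul hmn _ (pow_nonneg (by linarith) N) (by positivity)
            rw [← hexpt]
            calc ((1:ℝ)-p)^N ≤ Real.exp (-p)^N := hpow
              _ = Real.exp (-(N*p)) := hexp
              _ ≤ Real.exp (-t) := hexp2
        _ = δ/(2*t) := by
            rw [div_mul_div_comm, show (N:ℝ)*δ = δ*N by ring,
              show t*(2*(N:ℝ)) = 2*t*N by ring, mul_div_mul_right _ _ (ne_of_gt hNpos)]
        _ ≤ δ := div_le_self (le_of_lt hδ) (by linarith)

theorem stmt13 (n : ℕ) (hn : 1 ≤ n)
    (D : Set (EuclideanSpace ℝ (Fin n)))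
    (hD : D = {x : EuclideanSpace ℝ (Fin n) | ∀ i, x i ∈ Set.Icc (0 : ℝ) 1}) :
    ∃ k₁ > (0 : ℝ), ∃ k₂ > (0 : ℝ), ∃ N₀ : ℕ,
      ∀ δ : ℝ, 0 < δ → δ < 1 → ∀ N : ℕ, N₀ ≤ N →
        ENNReal.ofReal (1 - δ) ≤
          (Measure.pi fun _ : Fin N => volume.restrict D)
            {ω : Fin N → EuclideanSpace ℝ (Fin n) |
              ∀ x ∈ D, Metric.infDist x (Set.range ω) ≤
                k₁ * (Real.log (k₂ * N / δ) / N) ^ ((1 : ℝ) / n)} := by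
  have hsqrt : (0:ℝ) < Real.sqrt n := Real.sqrt_pos.2 (by exact_mod_cast hn)
  refine ⟨2 * Real.sqrt n, by positivity, 2, by norm_num, 1, ?_⟩
  intro δ hδ hδ1 N hN
  obtain ⟨m, hm1, hrad, hprob⟩ := key13 n N hn hN δ hδ hδ1
  -- D is the unit cube
  have hDcube : D = cube n 1 (fun _ => 0) := by
    rw [hD]; ext x; simp [cube]
  have hDmeas : MeasurableSet D := hDcube ▸ cube_meas _
  have hDvol : volume D = 1 := by
    rw [hDcube, cube_vol]; norm_num
  set μ := volume.restrict D with hμ_def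
  have hμuniv : μ Set.univ = 1 := by
    rw [hμ_def, Measure.restrict_apply_univ, hDvol]
  haveI : IsProbabilityMeasure μ := ⟨hμuniv⟩
  set P := Measure.pi fun _ : Fin N => μ with hP_def
  haveI : IsProbabilityMeasure P := by
    constructor
    rw [hP_def, Measure.pi_univ]
    simp [hμuniv]
  -- measure of each cube
  have hq0 : (0:ℝ) ≤ (1/(m:ℝ))^n := by positivity
  have hq1 : (1/(m:ℝ))^n ≤ 1 := by
    apply pow_le_one₀ (by positivity)
    rw [div_le_one (by exact_mod_cast hm1)]
    exact_mod_cast hm1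
  have hμcube : ∀ c : Fin n → Fin m, μ (cube n m c) = ENNReal.ofReal ((1/(m:ℝ))^n) := by
    intro c
    rw [hμ_def, Measure.restrict_apply (cube_meas c),
      Set.inter_eq_self_of_subset_left (by rw [hD]; exact cube_subset hm1 c), cube_vol]
  -- probability of missing a fixed cube
  set miss := fun c : Fin n → Fin m =>
    Set.pi Set.univ (fun _ : Fin N => (cube n m c)ᶜ) with hmiss_def
  have hPmiss : ∀ c, P (miss c) ≤ ENNReal.ofReal ((1 - (1/(m:ℝ))^n)^N) := by
    intro c
    rw [hmiss_def, hP_def, Measure.pi_pi]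
    have hcompl : μ (cube n m c)ᶜ = ENNReal.ofReal (1 - (1/(m:ℝ))^n) := by
      rw [measure_compl (cube_meas c) (measure_ne_top μ _), hμuniv, hμcube c,
        ENNReal.ofReal_sub _ hq0, ENNReal.ofReal_one]
    rw [hcompl]
    simp only [Finset.prod_const, Finset.card_univ, Fintype.card_fin]
    rw [← ENNReal.ofReal_pow (by linarith)]
  -- union bound
  have hPbad : P (⋃ c, miss c) ≤ ENNReal.ofReal δ := by
    calc P (⋃ c, miss c) ≤ ∑ c : Fin n → Fin m, P (miss c) := measure_iUnion_fintype_le P miss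
      _ ≤ ∑ _c : Fin n → Fin m, ENNReal.ofReal ((1 - (1/(m:ℝ))^n)^N) :=
          Finset.sum_le_sum fun c _ => hPmiss c
      _ = (m^n : ℕ) * ENNReal.ofReal ((1 - (1/(m:ℝ))^n)^N) := by
          rw [Finset.sum_const, Finset.card_univ, Fintype.card_fun]
          simp [nsmul_eq_mul, Fintype.card_fin]
      _ = ENNReal.ofReal ((m:ℝ)^n * (1 - (1/(m:ℝ))^n)^N) := by
          rw [ENNReal.ofReal_mul (by positivity)]
          congr 1
          rw [← ENNReal.ofReal_natCast]
          push_cast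
          ring_nf
      _ ≤ ENNReal.ofReal δ := ENNReal.ofReal_le_ofReal hprob
  -- inclusion of events
  have hincl : (⋃ c, miss c)ᶜ ⊆
      {ω : Fin N → EuclideanSpace ℝ (Fin n) |
        ∀ x ∈ D, Metric.infDist x (Set.range ω) ≤
          2 * Real.sqrt n * (Real.log (2 * N / δ) / N) ^ ((1 : ℝ) / n)} := by
    intro ω hω x hx
    have hω' : ∀ c : Fin n → Fin m, ∃ i, ω i ∈ cube n m c := by
      intro c
      have : ω ∉ miss c := fun h => hω (Set.mem_iUnion.2 ⟨c, h⟩)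
      rw [hmiss_def, Set.mem_univ_pi] at this
      push_neg at this
      obtain ⟨i, hi⟩ := this
      exact ⟨i, not_not.mp hi⟩
    have hx' : ∀ i, x i ∈ Set.Icc (0:ℝ) 1 := by rw [hD] at hx; exact hx
    obtain ⟨c, hxc⟩ := cube_cover hm1 hx'
    obtain ⟨i, hi⟩ := hω' c
    calc Metric.infDist x (Set.range ω) ≤ dist x (ω i) :=
          Metric.infDist_le_dist_of_mem (Set.mem_range_self i)
      _ ≤ Real.sqrt n / m := cube_dist hm1 hxc hi
      _ ≤ 2 * Real.sqrt n * (Real.log (2 * N / δ) / N) ^ ((1 : ℝ) / n) := hrad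
  -- conclude
  have hunion : (1:ENNReal) ≤
      P {ω : Fin N → EuclideanSpace ℝ (Fin n) |
        ∀ x ∈ D, Metric.infDist x (Set.range ω) ≤
          2 * Real.sqrt n * (Real.log (2 * N / δ) / N) ^ ((1 : ℝ) / n)} + P (⋃ c, miss c) := by
    have h1 : (Set.univ : Set (Fin N → EuclideanSpace ℝ (Fin n))) ⊆
        {ω : Fin N → EuclideanSpace ℝ (Fin n) |
          ∀ x ∈ D, Metric.infDist x (Set.range ω) ≤
            2 * Real.sqrt n * (Real.log (2 * N / δ) / N) ^ ((1 : ℝ) / n)} ∪ (⋃ c, miss c) := by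
      intro ω _
      rcases Classical.em (ω ∈ ⋃ c, miss c) with h | h
      · exact Or.inr h
      · exact Or.inl (hincl h)
    have h2 := measure_mono (μ := P) h1
    rw [measure_univ] at h2
    exact h2.trans (measure_union_le _ _)
  calc ENNReal.ofReal (1 - δ) = 1 - ENNReal.ofReal δ := by
        rw [ENNReal.ofReal_sub _ (le_of_lt hδ), ENNReal.ofReal_one]
    _ ≤ 1 - P (⋃ c, miss c) := tsub_le_tsub_left hPbad 1
    _ ≤ P {ω : Fin N → EuclideanSpace ℝ (Fin n) |
          ∀ x ∈ D, Metric.infDist x (Set.range ω) ≤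
            2 * Real.sqrt n * (Real.log (2 * N / δ) / N) ^ ((1 : ℝ) / n)} := by
        rw [tsub_le_iff_right]
        exact hunion
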